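/- Let A (n×n), B (n×m), C (p×n), K̄, K̲ (m×n), L̄, L̲ (n×p), E (n×q) with E ≥ 0 entrywise, and F (p×r) be real matrices. Let G = [[A + B(K̄ + K̲), BK̄, −BK̲], [0, A − L̄C, 0], [0, 0, A − L̲C]], d = (E𝟙, L̄F𝟙 − E𝟙, E𝟙 − L̲F𝟙), and f(z) = Gz + d. Suppose the set X_e = {(x, ē, e̲) ∈ ℝ^{3n} : x ≥ 0, ē ≥ 0, 0 ≤ e̲ ≤ x} is invariant under f and there exists X* ∈ X_e such that for every z₀ ∈ X_e the iterates f^t(z₀) converge to X*. Then: A + B(K̄ + K̲), A − L̄C, and A − L̲C are Schur stable; the six inequalities A + B(K̄ + K̲) ≥ 0, A + BK̄ ≥ 0, BK̄ ≥ 0, A − L̄C ≥ 0, A − L̲C ≥ 0, BK̄ + L̲C ≥ 0 hold; and L̄F𝟙 − E𝟙 ≥ 0, E𝟙 − L̲F𝟙 ≥ 0, L̲F𝟙 ≥ 0. -/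

import Mathlib

open Matrix Filter

/-- A real square matrix is Schur stable if its spectral radius (computed over ℂ) is
strictly less than one. -/
def IsSchur {ι : Type*} [Fintype ι] [DecidableEq ι] (M : Matrix ι ι ℝ) : Prop :=
  spectralRadius ℂ (M.map (algebraMap ℝ ℂ)) < 1

/-- The error-coordinate closed-loop map `(x, ē, e̲) ↦ G (x, ē, e̲)` with
`G = [[A + B(K̄ + K̲), BK̄, −BK̲], [0, A − L̄C, 0], [0, 0, A − L̲C]]`. -/
def Gmap {n m p : ℕ}
    (A : Matrix (Fin n) (Fin n) ℝ) (B : Matrix (Fin n) (Fin m) ℝ)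
    (C : Matrix (Fin p) (Fin n) ℝ)
    (Ku Kl : Matrix (Fin m) (Fin n) ℝ) (Lu Ll : Matrix (Fin n) (Fin p) ℝ)
    (z : (Fin n → ℝ) × (Fin n → ℝ) × (Fin n → ℝ)) :
    (Fin n → ℝ) × (Fin n → ℝ) × (Fin n → ℝ) :=
  ((A + B * (Ku + Kl)) *ᵥ z.1 + (B * Ku) *ᵥ z.2.1 - (B * Kl) *ᵥ z.2.2,
   (A - Lu * C) *ᵥ z.2.1,
   (A - Ll * C) *ᵥ z.2.2)

/-- The constant term `d = (E𝟙, L̄F𝟙 − E𝟙, E𝟙 − L̲F𝟙)` of the expected error dynamics. -/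
def noiseOffset {n p q r : ℕ}
    (Lu Ll : Matrix (Fin n) (Fin p) ℝ)
    (E : Matrix (Fin n) (Fin q) ℝ) (F : Matrix (Fin p) (Fin r) ℝ) :
    (Fin n → ℝ) × (Fin n → ℝ) × (Fin n → ℝ) :=
  (E *ᵥ (fun _ => (1 : ℝ)),
   (Lu * F) *ᵥ (fun _ => (1 : ℝ)) - E *ᵥ (fun _ => (1 : ℝ)),
   E *ᵥ (fun _ => (1 : ℝ)) - (Ll * F) *ᵥ (fun _ => (1 : ℝ)))

/-- The affine expected error dynamics `f(z) = Gz + d`. -/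
def noisyMap {n m p q r : ℕ}
    (A : Matrix (Fin n) (Fin n) ℝ) (B : Matrix (Fin n) (Fin m) ℝ)
    (C : Matrix (Fin p) (Fin n) ℝ)
    (Ku Kl : Matrix (Fin m) (Fin n) ℝ) (Lu Ll : Matrix (Fin n) (Fin p) ℝ)
    (E : Matrix (Fin n) (Fin q) ℝ) (F : Matrix (Fin p) (Fin r) ℝ)
    (z : (Fin n → ℝ) × (Fin n → ℝ) × (Fin n → ℝ)) :
    (Fin n → ℝ) × (Fin n → ℝ) × (Fin n → ℝ) :=
  Gmap A B C Ku Kl Lu Ll z + noiseOffset Lu Ll E F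

/-- The error cone `X_e = {(x, ē, e̲) : x ≥ 0, ē ≥ 0, 0 ≤ e̲ ≤ x entrywise}`. -/
def errorCone (n : ℕ) : Set ((Fin n → ℝ) × (Fin n → ℝ) × (Fin n → ℝ)) :=
  {z | (∀ i, 0 ≤ z.1 i) ∧ (∀ i, 0 ≤ z.2.1 i) ∧ (∀ i, 0 ≤ z.2.2 i) ∧
       (∀ i, z.2.2 i ≤ z.1 i)}


lemma schur_of_pow_tendsto {N : ℕ} (M : Matrix (Fin N) (Fin N) ℝ)
    (h : ∀ i j, Tendsto (fun t => (M ^ t) i j) atTop (nhds 0)) : IsSchur M := by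
  classical
  set Mc := M.map (algebraMap ℝ ℂ) with hMc
  have hmap : ∀ t : ℕ, Mc ^ t = (M ^ t).map (algebraMap ℝ ℂ) := by
    intro t
    have := map_pow ((algebraMap ℝ ℂ).mapMatrix) M t
    rw [hMc]
    simpa [RingHom.mapMatrix_apply] using this.symm
  have key : ∀ μ ∈ spectrum ℂ Mc, (‖μ‖₊ : ENNReal) < 1 := by
    intro μ hμ
    rw [← AlgEquiv.spectrum_eq (Matrix.toLinAlgEquiv' : Matrix (Fin N) (Fin N) ℂ ≃ₐ[ℂ] _)] at hμ
    have hev : Module.End.HasEigenvalue (Matrix.toLinAlgEquiv' Mc) μ :=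
      Module.End.hasEigenvalue_iff_mem_spectrum.mpr hμ
    obtain ⟨v, hv⟩ := hev.exists_hasEigenvector
    have hMv : Mc *ᵥ v = μ • v := by
      rw [← Matrix.toLinAlgEquiv'_apply]; exact hv.apply_eq_smul
    have hpow : ∀ t : ℕ, (Mc ^ t) *ᵥ v = μ ^ t • v := by
      intro t
      induction t with
      | zero => simp
      | succ t ih =>
        rw [pow_succ', ← Matrix.mulVec_mulVec, ih, Matrix.mulVec_smul, hMv,
          smul_smul, ← pow_succ]
    obtain ⟨i, hvi⟩ := Function.ne_iff.mp hv.right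
    simp only [Pi.zero_apply] at hvi
    have hC : Tendsto (fun t => ((Mc ^ t) *ᵥ v) i) atTop (nhds 0) := by
      have : ∀ t, ((Mc ^ t) *ᵥ v) i = ∑ j, ((M ^ t) i j : ℂ) * v j := by
        intro t; rw [hmap]; simp [Matrix.mulVec, dotProduct, Matrix.map_apply]
      simp only [this]
      have : Tendsto (fun t => ∑ j, ((M ^ t) i j : ℂ) * v j) atTop (nhds (∑ j : Fin N, 0)) := by
        apply tendsto_finset_sum
        intro j _
        have h1 : Tendsto (fun t => ((M ^ t) i j : ℂ)) atTop (nhds ((0 : ℝ) : ℂ)) :=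
          (Complex.continuous_ofReal.tendsto _).comp (h i j)
        simpa using h1.mul_const (v j)
      simpa using this
    have hμt : Tendsto (fun t : ℕ => μ ^ t * v i) atTop (nhds 0) := by
      apply hC.congr
      intro t
      rw [hpow]; simp [Pi.smul_apply, smul_eq_mul]
    have hμt2 : Tendsto (fun t : ℕ => μ ^ t) atTop (nhds 0) := by
      have := hμt.mul_const (v i)⁻¹
      simpa [mul_assoc, mul_inv_cancel₀ hvi] using this
    have hnorm : Tendsto (fun t : ℕ => ‖μ‖ ^ t) atTop (nhds 0) := by
      simpa [norm_pow] using hμt2.norm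
    have : |‖μ‖| < 1 := by
      by_contra hcon
      push_neg at hcon
      have h1 : ∀ t : ℕ, (1:ℝ) ≤ ‖μ‖ ^ t := by
        intro t
        calc (1:ℝ) = 1 ^ t := (one_pow t).symm
        _ ≤ |‖μ‖| ^ t := pow_le_pow_left₀ (by norm_num) hcon t
        _ = ‖μ‖ ^ t := by rw [abs_of_nonneg (norm_nonneg _)]
      have := le_of_tendsto_of_tendsto' tendsto_const_nhds hnorm (fun t => h1 t)
      linarith
    have hlt : ‖μ‖ < 1 := lt_of_abs_lt this
    have : (‖μ‖₊ : NNReal) < 1 := by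
      rwa [← NNReal.coe_lt_coe, coe_nnnorm, NNReal.coe_one]
    exact_mod_cast this
  have hfin : (spectrum ℂ Mc).Finite := Matrix.finite_spectrum Mc
  rw [IsSchur, spectralRadius]
  calc (⨆ k ∈ spectrum ℂ Mc, (‖k‖₊ : ENNReal))
      ≤ hfin.toFinset.sup (fun k => (‖k‖₊ : ENNReal)) := by
        apply iSup₂_le
        intro k hk
        exact Finset.le_sup (f := fun k => (‖k‖₊ : ENNReal)) (hfin.mem_toFinset.mpr hk)
    _ < 1 := by
        rw [Finset.sup_lt_iff (by norm_num : (⊥ : ENNReal) < 1)]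
        intro k hk
        exact key k (hfin.mem_toFinset.mp hk)


lemma aux_nonneg {a c : ℝ} (hc : 0 ≤ c) (h : ∀ s : ℝ, 0 ≤ s → 0 ≤ a * s + c) : 0 ≤ a := by
  by_contra h'
  push_neg at h'
  have hs : 0 ≤ (c + 1) / (-a) := div_nonneg (by linarith) (by linarith)
  have h2 := h _ hs
  have ha : a ≠ 0 := ne_of_lt h'
  have h3 : a * ((c + 1) / (-a)) = -(c + 1) := by
    rw [mul_comm, div_mul_eq_mul_div, div_neg, mul_div_assoc, div_self ha, mul_one]
  rw [h3] at h2
  linarith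

lemma single_entry_nonneg {n : ℕ} {s : ℝ} (hs : 0 ≤ s) (j i : Fin n) :
    0 ≤ (Pi.single j s : Fin n → ℝ) i := by
  rcases eq_or_ne i j with rfl | h
  · rw [Pi.single_eq_same]; exact hs
  · rw [Pi.single_eq_of_ne h]

section dynamics

variable {n m p q r : ℕ}
    (A : Matrix (Fin n) (Fin n) ℝ) (B : Matrix (Fin n) (Fin m) ℝ)
    (C : Matrix (Fin p) (Fin n) ℝ)
    (Ku Kl : Matrix (Fin m) (Fin n) ℝ) (Lu Ll : Matrix (Fin n) (Fin p) ℝ)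
    (E : Matrix (Fin n) (Fin q) ℝ) (F : Matrix (Fin p) (Fin r) ℝ)

lemma Gmap_sub (z w : (Fin n → ℝ) × (Fin n → ℝ) × (Fin n → ℝ)) :
    Gmap A B C Ku Kl Lu Ll (z - w) =
      Gmap A B C Ku Kl Lu Ll z - Gmap A B C Ku Kl Lu Ll w := by
  simp only [Gmap, Prod.fst_sub, Prod.snd_sub, Matrix.mulVec_sub, Prod.mk_sub_mk]
  refine Prod.ext ?_ (Prod.ext ?_ ?_) <;> simp <;> abel

lemma noisy_iter_sub (z w : (Fin n → ℝ) × (Fin n → ℝ) × (Fin n → ℝ)) (t : ℕ) :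
    (noisyMap A B C Ku Kl Lu Ll E F)^[t] z - (noisyMap A B C Ku Kl Lu Ll E F)^[t] w =
      (Gmap A B C Ku Kl Lu Ll)^[t] (z - w) := by
  induction t with
  | zero => simp
  | succ t ih =>
    rw [Function.iterate_succ_apply', Function.iterate_succ_apply',
      Function.iterate_succ_apply', ← ih, noisyMap, noisyMap, add_sub_add_right_eq_sub,
      ← Gmap_sub]

lemma Gmap_iter_snd_fst (z : (Fin n → ℝ) × (Fin n → ℝ) × (Fin n → ℝ)) (t : ℕ) :
    ((Gmap A B C Ku Kl Lu Ll)^[t] z).2.1 = ((A - Lu * C) ^ t) *ᵥ z.2.1 := by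
  induction t with
  | zero => simp
  | succ t ih =>
    rw [Function.iterate_succ_apply']
    show (A - Lu * C) *ᵥ ((Gmap A B C Ku Kl Lu Ll)^[t] z).2.1 = _
    rw [ih, Matrix.mulVec_mulVec, ← pow_succ']

lemma Gmap_iter_snd_snd (z : (Fin n → ℝ) × (Fin n → ℝ) × (Fin n → ℝ)) (t : ℕ) :
    ((Gmap A B C Ku Kl Lu Ll)^[t] z).2.2 = ((A - Ll * C) ^ t) *ᵥ z.2.2 := by
  induction t with
  | zero => simp
  | succ t ih =>
    rw [Function.iterate_succ_apply']
    show (A - Ll * C) *ᵥ ((Gmap A B C Ku Kl Lu Ll)^[t] z).2.2 = _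
    rw [ih, Matrix.mulVec_mulVec, ← pow_succ']

lemma Gmap_iter_fst (x : Fin n → ℝ) (t : ℕ) :
    (Gmap A B C Ku Kl Lu Ll)^[t] (x, 0, 0) =
      (((A + B * (Ku + Kl)) ^ t) *ᵥ x, 0, 0) := by
  induction t with
  | zero => simp
  | succ t ih =>
    rw [Function.iterate_succ_apply', ih]
    show Gmap A B C Ku Kl Lu Ll _ = _
    rw [Gmap]
    simp only [Matrix.mulVec_zero, add_zero, sub_zero, Matrix.mulVec_mulVec, ← pow_succ']

end dynamics

/-- **Necessity in Theorem 2.** If the cone `X_e` is invariant under the affine expected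
error dynamics `f(z) = Gz + d` and all iterates started in `X_e` converge to a fixed
point `X* ∈ X_e`, then the three diagonal blocks are Schur stable and the six
inequalities of Lemma 1 as well as the three noise inequalities hold. -/
theorem ineqs_of_noisy_positive_observer {n m p q r : ℕ}
    (A : Matrix (Fin n) (Fin n) ℝ) (B : Matrix (Fin n) (Fin m) ℝ)
    (C : Matrix (Fin p) (Fin n) ℝ)
    (Ku Kl : Matrix (Fin m) (Fin n) ℝ) (Lu Ll : Matrix (Fin n) (Fin p) ℝ)
    (E : Matrix (Fin n) (Fin q) ℝ) (F : Matrix (Fin p) (Fin r) ℝ)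
    (hE : ∀ i j, 0 ≤ E i j)
    (hinv : ∀ z ∈ errorCone n, noisyMap A B C Ku Kl Lu Ll E F z ∈ errorCone n)
    (hconv : ∃ Xstar ∈ errorCone n, ∀ z₀ ∈ errorCone n,
      Tendsto (fun t => (noisyMap A B C Ku Kl Lu Ll E F)^[t] z₀) atTop (nhds Xstar)) :
    IsSchur (A + B * (Ku + Kl)) ∧ IsSchur (A - Lu * C) ∧ IsSchur (A - Ll * C) ∧
    (∀ i j, 0 ≤ (A + B * (Ku + Kl)) i j) ∧
    (∀ i j, 0 ≤ (A + B * Ku) i j) ∧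
    (∀ i j, 0 ≤ (B * Ku) i j) ∧
    (∀ i j, 0 ≤ (A - Lu * C) i j) ∧
    (∀ i j, 0 ≤ (A - Ll * C) i j) ∧
    (∀ i j, 0 ≤ (B * Ku + Ll * C) i j) ∧
    (∀ i, 0 ≤ ((Lu * F) *ᵥ (fun _ => (1 : ℝ)) - E *ᵥ (fun _ => (1 : ℝ))) i) ∧
    (∀ i, 0 ≤ (E *ᵥ (fun _ => (1 : ℝ)) - (Ll * F) *ᵥ (fun _ => (1 : ℝ))) i) ∧
    (∀ i, 0 ≤ ((Ll * F) *ᵥ (fun _ => (1 : ℝ))) i) := by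
  classical
  obtain ⟨Xs, _, hconv⟩ := hconv
  have mem0 : (0 : (Fin n → ℝ) × (Fin n → ℝ) × (Fin n → ℝ)) ∈ errorCone n := by
    refine ⟨?_, ?_, ?_, ?_⟩ <;> intro i <;> simp
  -- convergence of the linear iterates to zero
  have key : ∀ z₀ ∈ errorCone n,
      Tendsto (fun t => (Gmap A B C Ku Kl Lu Ll)^[t] z₀) atTop (nhds 0) := by
    intro z₀ hz₀
    have h1 := (hconv z₀ hz₀).sub (hconv 0 mem0)
    rw [sub_self] at h1
    have h2 : (fun t => (noisyMap A B C Ku Kl Lu Ll E F)^[t] z₀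
        - (noisyMap A B C Ku Kl Lu Ll E F)^[t] 0)
        = fun t => (Gmap A B C Ku Kl Lu Ll)^[t] z₀ := by
      funext t
      rw [noisy_iter_sub, sub_zero]
    rwa [h2] at h1
  -- single-vector cone points
  have memS1 : ∀ (j : Fin n) (s : ℝ), 0 ≤ s →
      ((Pi.single j s : Fin n → ℝ), (0 : Fin n → ℝ), (0 : Fin n → ℝ)) ∈ errorCone n :=
    fun j s hs => ⟨fun i => single_entry_nonneg hs j i, fun i => le_refl 0,
      fun i => le_refl 0, fun i => single_entry_nonneg hs j i⟩
  have memS2 : ∀ (j : Fin n) (s : ℝ), 0 ≤ s →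
      ((0 : Fin n → ℝ), (Pi.single j s : Fin n → ℝ), (0 : Fin n → ℝ)) ∈ errorCone n :=
    fun j s hs => ⟨fun i => le_refl 0, fun i => single_entry_nonneg hs j i,
      fun i => le_refl 0, fun i => le_refl 0⟩
  have memS3 : ∀ (j : Fin n) (s : ℝ), 0 ≤ s →
      ((Pi.single j s : Fin n → ℝ), (0 : Fin n → ℝ), (Pi.single j s : Fin n → ℝ))
        ∈ errorCone n :=
    fun j s hs => ⟨fun i => single_entry_nonneg hs j i, fun i => le_refl 0,
      fun i => single_entry_nonneg hs j i, fun i => le_refl ((Pi.single j s : Fin n → ℝ) i)⟩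
  -- Schur stability of the three blocks
  have hS1 : IsSchur (A + B * (Ku + Kl)) := by
    apply schur_of_pow_tendsto
    intro i j
    have h := key _ (memS1 j 1 zero_le_one)
    have h' := (((continuous_apply i).comp continuous_fst).tendsto 0).comp h
    simp only [Function.comp_def] at h'
    have h'' : Tendsto (fun t => ((Gmap A B C Ku Kl Lu Ll)^[t]
        ((Pi.single j 1 : Fin n → ℝ), 0, 0)).1 i) atTop (nhds 0) := by simpa using h'
    apply h''.congr
    intro t
    rw [Gmap_iter_fst]
    simp
  have hS2 : IsSchur (A - Lu * C) := by
    apply schur_of_pow_tendsto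
    intro i j
    have h := key _ (memS2 j 1 zero_le_one)
    have h' := (((continuous_apply i).comp (continuous_fst.comp continuous_snd)).tendsto 0).comp h
    simp only [Function.comp_def] at h'
    have h'' : Tendsto (fun t => ((Gmap A B C Ku Kl Lu Ll)^[t]
        ((0 : Fin n → ℝ), (Pi.single j 1 : Fin n → ℝ), 0)).2.1 i) atTop (nhds 0) := by
      simpa using h'
    apply h''.congr
    intro t
    rw [Gmap_iter_snd_fst]
    simp
  have hS3 : IsSchur (A - Ll * C) := by
    apply schur_of_pow_tendsto
    intro i j
    have h := key _ (memS3 j 1 zero_le_one)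
    have h' := (((continuous_apply i).comp (continuous_snd.comp continuous_snd)).tendsto 0).comp h
    simp only [Function.comp_def] at h'
    have h'' : Tendsto (fun t => ((Gmap A B C Ku Kl Lu Ll)^[t]
        ((Pi.single j 1 : Fin n → ℝ), 0, (Pi.single j 1 : Fin n → ℝ))).2.2 i)
        atTop (nhds 0) := by simpa using h'
    apply h''.congr
    intro t
    rw [Gmap_iter_snd_snd]
    simp
  -- nonnegativity of E𝟙
  have hone : ∀ i, 0 ≤ (E *ᵥ (fun _ => (1 : ℝ))) i := by
    intro i
    have hrw : (E *ᵥ (fun _ => (1 : ℝ))) i = ∑ j, E i j := by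
      simp [Matrix.mulVec, dotProduct]
    rw [hrw]
    exact Finset.sum_nonneg fun j _ => hE i j
  -- inequalities from invariance at 0
  obtain ⟨d1, d2, d3, d4⟩ := hinv 0 mem0
  have h9 : ∀ i, 0 ≤ ((Lu * F) *ᵥ (fun _ => (1 : ℝ)) - E *ᵥ (fun _ => (1 : ℝ))) i := by
    intro i
    have := d2 i
    simpa [noisyMap, Gmap, noiseOffset] using this
  have h10 : ∀ i, 0 ≤ (E *ᵥ (fun _ => (1 : ℝ)) - (Ll * F) *ᵥ (fun _ => (1 : ℝ))) i := by
    intro i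
    have := d3 i
    simpa [noisyMap, Gmap, noiseOffset] using this
  have h11 : ∀ i, 0 ≤ ((Ll * F) *ᵥ (fun _ => (1 : ℝ))) i := by
    intro i
    have h := d4 i
    simp only [noisyMap, Gmap, noiseOffset, Matrix.mulVec_zero, Prod.fst_zero, Prod.snd_zero, Prod.fst_add, Prod.snd_add,
      Pi.add_apply, Pi.sub_apply, add_zero, sub_zero, zero_add, Pi.zero_apply] at h
    linarith
  -- matrix inequalities
  have hMx : ∀ i j, 0 ≤ (A + B * (Ku + Kl)) i j := by
    intro i j
    apply aux_nonneg (hone i)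
    intro s hs
    obtain ⟨c1, _, _, _⟩ := hinv _ (memS1 j s hs)
    have h := c1 i
    simp only [noisyMap, Gmap, noiseOffset, Matrix.mulVec_zero, Matrix.mulVec_single, Pi.smul_apply, op_smul_eq_mul, Matrix.col_apply, Prod.fst_zero, Prod.snd_zero,
      Prod.fst_add, Pi.add_apply, Pi.sub_apply, add_zero, sub_zero, zero_add,
      Pi.zero_apply] at h
    linarith
  have hBKu : ∀ i j, 0 ≤ (B * Ku) i j := by
    intro i j
    apply aux_nonneg (hone i)
    intro s hs
    obtain ⟨c1, _, _, _⟩ := hinv _ (memS2 j s hs)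
    have h := c1 i
    simp only [noisyMap, Gmap, noiseOffset, Matrix.mulVec_zero, Matrix.mulVec_single, Pi.smul_apply, op_smul_eq_mul, Matrix.col_apply, Prod.fst_zero, Prod.snd_zero,
      Prod.fst_add, Pi.add_apply, Pi.sub_apply, add_zero, sub_zero, zero_add,
      Pi.zero_apply] at h
    linarith
  have hMu : ∀ i j, 0 ≤ (A - Lu * C) i j := by
    intro i j
    apply aux_nonneg (h9 i)
    intro s hs
    obtain ⟨_, c2, _, _⟩ := hinv _ (memS2 j s hs)
    have h := c2 i
    simp only [noisyMap, Gmap, noiseOffset, Matrix.mulVec_zero, Matrix.mulVec_single, Pi.smul_apply, op_smul_eq_mul, Matrix.col_apply, Prod.fst_zero, Prod.snd_zero,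
      Prod.snd_add, Prod.fst_add, Pi.add_apply, Pi.sub_apply, add_zero, sub_zero, zero_add,
      Pi.zero_apply] at h
    simp only [Pi.sub_apply]
    linarith
  have hMl : ∀ i j, 0 ≤ (A - Ll * C) i j := by
    intro i j
    apply aux_nonneg (h10 i)
    intro s hs
    obtain ⟨_, _, c3, _⟩ := hinv _ (memS3 j s hs)
    have h := c3 i
    simp only [noisyMap, Gmap, noiseOffset, Matrix.mulVec_zero, Matrix.mulVec_single, Pi.smul_apply, op_smul_eq_mul, Matrix.col_apply, Prod.fst_zero, Prod.snd_zero,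
      Prod.snd_add, Prod.fst_add, Pi.add_apply, Pi.sub_apply, add_zero, sub_zero, zero_add,
      Pi.zero_apply] at h
    simp only [Pi.sub_apply]
    linarith
  have hBKuLlC : ∀ i j, 0 ≤ (B * Ku + Ll * C) i j := by
    have hmat : B * Ku + Ll * C = (A + B * (Ku + Kl)) - (B * Kl) - (A - Ll * C) := by
      rw [Matrix.mul_add]
      abel
    intro i j
    have hentry : (B * Ku + Ll * C) i j
        = (A + B * (Ku + Kl)) i j - (B * Kl) i j - (A - Ll * C) i j := by
      rw [hmat]
      simp [Matrix.sub_apply]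
    apply aux_nonneg (h11 i)
    intro s hs
    obtain ⟨_, _, _, c4⟩ := hinv _ (memS3 j s hs)
    have h := c4 i
    simp only [noisyMap, Gmap, noiseOffset, Matrix.mulVec_zero, Matrix.mulVec_single, Pi.smul_apply, op_smul_eq_mul, Matrix.col_apply, Prod.fst_zero, Prod.snd_zero,
      Prod.snd_add, Prod.fst_add, Pi.add_apply, Pi.sub_apply, add_zero, sub_zero, zero_add,
      Pi.zero_apply] at h
    rw [hentry, sub_mul, sub_mul]
    linarith
  have hABKu : ∀ i j, 0 ≤ (A + B * Ku) i j := by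
    have hmat2 : A + B * Ku = (A - Ll * C) + (B * Ku + Ll * C) := by abel
    intro i j
    rw [hmat2, Matrix.add_apply]
    exact add_nonneg (hMl i j) (hBKuLlC i j)
  exact ⟨hS1, hS2, hS3, hMx, hABKu, hBKu, hMu, hMl, hBKuLlC, h9, h10, h11⟩
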